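/- arXiv:1008.4095 — 2 statements merged into one kernel-verified Lean document; each statement's English description precedes it below -/
import Mathlib

section
/- In the setting of the Bari–Markus theorem, if Γ₁ ⊂ Γ is a finite subset such that M² ∑_{γ∈Γ∖Γ₁} ‖P_γ − P⁰_γ‖² < 1/4 (where M = ‖A‖·‖A^{-1}‖), then the operator T x = ∑_{γ∈Γ∖Γ₁} (P_γ − P⁰_γ) P⁰_γ x satisfies ‖T‖ < 1/2, and hence B = I + T is a bounded invertible operator on H. -/
/-- in the Bari–Markus setting, if `Γ₁ ⊂ Γ` is finite and
`M² ∑_{γ∉Γ₁} ‖P γ − P⁰ γ‖² < 1/4` (with `M = ‖A‖‖A⁻¹‖` and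
`∑ γ ‖P⁰ γ x‖² ≤ M²‖x‖²`), then `T x = ∑_{γ∉Γ₁} (P γ − P⁰ γ)(P⁰ γ x)` defines a
bounded operator with `‖T‖ < 1/2`, and `B = I + T` is bounded invertible. -/
theorem bari_markus_perturbation_operator
    {H : Type*} [NormedAddCommGroup H] [InnerProductSpace ℂ H] [CompleteSpace H]
    {Γ : Type*} [Countable Γ]
    (P : Γ → H →L[ℂ] H)
    (hPidem : ∀ γ, (P γ).comp (P γ) = P γ)
    (hPfin : ∀ γ, FiniteDimensional ℂ (LinearMap.range (P γ : H →ₗ[ℂ] H)))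
    (hPorth : ∀ α β, α ≠ β → (P α).comp (P β) = 0)
    (A : H ≃L[ℂ] H) (Q : Γ → H →L[ℂ] H) (P0 : Γ → H →L[ℂ] H)
    (hP0 : ∀ γ, P0 γ = ((A : H →L[ℂ] H).comp (Q γ)).comp (A.symm : H →L[ℂ] H))
    (M : ℝ) (hM : M = ‖(A : H →L[ℂ] H)‖ * ‖(A.symm : H →L[ℂ] H)‖)
    (hbound : ∀ x : H, (Summable fun γ => ‖P0 γ x‖ ^ 2) ∧
      ∑' γ, ‖P0 γ x‖ ^ 2 ≤ M ^ 2 * ‖x‖ ^ 2)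
    (Γ₁ : Finset Γ)
    (htail : Summable fun γ : {γ : Γ // γ ∉ Γ₁} => ‖P γ.1 - P0 γ.1‖ ^ 2)
    (hsmall : M ^ 2 * ∑' γ : {γ : Γ // γ ∉ Γ₁}, ‖P γ.1 - P0 γ.1‖ ^ 2 < 1 / 4) :
    ∃ T : H →L[ℂ] H,
      (∀ x : H, HasSum (fun γ : {γ : Γ // γ ∉ Γ₁} =>
          (P γ.1 - P0 γ.1) (P0 γ.1 x)) (T x)) ∧
      ‖T‖ < 1 / 2 ∧
      ∃ B : H ≃L[ℂ] H, (B : H →L[ℂ] H) = 1 + T := by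
  classical
  set ι := {γ : Γ // γ ∉ Γ₁}
  set a : ι → ℝ := fun γ => ‖P γ.1 - P0 γ.1‖ with ha
  set S : ℝ := ∑' γ : ι, a γ ^ 2 with hSdef
  have hS0 : 0 ≤ S := tsum_nonneg fun γ => sq_nonneg _
  have hM0 : 0 ≤ M := by
    rw [hM]; positivity
  -- the key constant
  set C : ℝ := Real.sqrt S * M with hC
  have hC0 : 0 ≤ C := mul_nonneg (Real.sqrt_nonneg _) hM0
  have hChalf : C < 1 / 2 := by
    have hCsq : C ^ 2 < (1 / 2 : ℝ) ^ 2 := by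
      have : C ^ 2 = M ^ 2 * S := by
        rw [hC, mul_pow, Real.sq_sqrt hS0]; ring
      rw [this]
      calc M ^ 2 * S < 1 / 4 := hsmall
        _ = (1 / 2 : ℝ) ^ 2 := by norm_num
    exact lt_of_pow_lt_pow_left₀ 2 (by norm_num) hCsq
  have hpq : Real.HolderConjugate 2 2 := by
    constructor <;> norm_num
  -- Cauchy–Schwarz estimates, for every x
  have key : ∀ x : H,
      (Summable fun γ : ι => a γ * ‖P0 γ.1 x‖) ∧
        ∑' γ : ι, a γ * ‖P0 γ.1 x‖ ≤ C * ‖x‖ := by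
    intro x
    have hbsum : Summable fun γ : ι => ‖P0 γ.1 x‖ ^ 2 := (hbound x).1.subtype _
    have hbsum' : ∑' γ : ι, ‖P0 γ.1 x‖ ^ 2 ≤ M ^ 2 * ‖x‖ ^ 2 := by
      refine le_trans ?_ (hbound x).2
      exact Summable.tsum_subtype_le (fun γ => ‖P0 γ x‖ ^ 2) _ (fun γ => sq_nonneg _) (hbound x).1
    have htail' : Summable fun γ : ι => a γ ^ (2 : ℝ) := by
      simpa [Real.rpow_two] using htail
    have hbsum2 : Summable fun γ : ι => ‖P0 γ.1 x‖ ^ (2 : ℝ) := by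
      simpa [Real.rpow_two] using hbsum
    obtain ⟨hsum, hle⟩ := Real.summable_and_inner_le_Lp_mul_Lq_tsum_of_nonneg hpq
      (fun γ : ι => norm_nonneg _) (fun γ : ι => norm_nonneg _) htail' hbsum2
    refine ⟨hsum, hle.trans ?_⟩
    have e1 : (∑' γ : ι, a γ ^ (2 : ℝ)) = S := by
      rw [hSdef]; congr 1; ext γ; rw [Real.rpow_two]
    have e2 : (∑' γ : ι, ‖P0 γ.1 x‖ ^ (2 : ℝ)) = ∑' γ : ι, ‖P0 γ.1 x‖ ^ 2 := by
      congr 1; ext γ; rw [Real.rpow_two]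
    rw [e1, e2]
    have h1 : S ^ ((1 : ℝ) / 2) = Real.sqrt S := (Real.sqrt_eq_rpow S).symm
    have h2 : (∑' γ : ι, ‖P0 γ.1 x‖ ^ 2) ^ ((1 : ℝ) / 2) ≤ M * ‖x‖ := by
      rw [← Real.sqrt_eq_rpow]
      have : Real.sqrt (∑' γ : ι, ‖P0 γ.1 x‖ ^ 2) ≤ Real.sqrt (M ^ 2 * ‖x‖ ^ 2) :=
        Real.sqrt_le_sqrt hbsum'
      refine this.trans_eq ?_
      rw [show M ^ 2 * ‖x‖ ^ 2 = (M * ‖x‖) ^ 2 by ring,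
        Real.sqrt_sq (by positivity)]
    calc S ^ ((1 : ℝ) / 2) * (∑' γ : ι, ‖P0 γ.1 x‖ ^ 2) ^ ((1 : ℝ) / 2)
        ≤ Real.sqrt S * (M * ‖x‖) := by
          rw [h1]
          exact mul_le_mul_of_nonneg_left h2 (Real.sqrt_nonneg _)
      _ = C * ‖x‖ := by rw [hC]; ring
  -- summability of the vector-valued series
  have hnorm : ∀ x : H, Summable fun γ : ι => ‖(P γ.1 - P0 γ.1) (P0 γ.1 x)‖ := by
    intro x
    exact Summable.of_nonneg_of_le (fun γ => norm_nonneg _)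
      (fun γ => (P γ.1 - P0 γ.1).le_opNorm _) (key x).1
  have hvsum : ∀ x : H, Summable fun γ : ι => (P γ.1 - P0 γ.1) (P0 γ.1 x) :=
    fun x => (hnorm x).of_norm
  -- the linear map
  set T₀ : H →ₗ[ℂ] H :=
    { toFun := fun x => ∑' γ : ι, (P γ.1 - P0 γ.1) (P0 γ.1 x)
      map_add' := by
        intro x y
        have h : (∑' γ : ι, (P γ.1 - P0 γ.1) (P0 γ.1 (x + y)))
            = (∑' γ : ι, (P γ.1 - P0 γ.1) (P0 γ.1 x))
              + ∑' γ : ι, (P γ.1 - P0 γ.1) (P0 γ.1 y) := by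
          rw [← Summable.tsum_add (hvsum x) (hvsum y)]
          congr 1; ext γ; simp [map_add]
        exact h
      map_smul' := by
        intro c x
        have h : (∑' γ : ι, (P γ.1 - P0 γ.1) (P0 γ.1 (c • x)))
            = c • ∑' γ : ι, (P γ.1 - P0 γ.1) (P0 γ.1 x) := by
          rw [← ((hvsum x).hasSum.const_smul c).tsum_eq]
          congr 1; ext γ; simp [map_smul]
        exact h } with hT₀
  have hT₀bound : ∀ x : H, ‖T₀ x‖ ≤ C * ‖x‖ := by
    intro x
    calc ‖∑' γ : ι, (P γ.1 - P0 γ.1) (P0 γ.1 x)‖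
        ≤ ∑' γ : ι, ‖(P γ.1 - P0 γ.1) (P0 γ.1 x)‖ := norm_tsum_le_tsum_norm (hnorm x)
      _ ≤ ∑' γ : ι, a γ * ‖P0 γ.1 x‖ := by
          exact Summable.tsum_le_tsum (fun γ => (P γ.1 - P0 γ.1).le_opNorm _)
            (hnorm x) (key x).1
      _ ≤ C * ‖x‖ := (key x).2
  refine ⟨T₀.mkContinuous C hT₀bound, ?_, ?_, ?_⟩
  · intro x
    exact (hvsum x).hasSum
  · exact lt_of_le_of_lt (T₀.mkContinuous_norm_le hC0 hT₀bound) hChalf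
  · set T : H →L[ℂ] H := T₀.mkContinuous C hT₀bound
    have hnT : ‖-T‖ < 1 := by
      rw [norm_neg]
      exact lt_trans (lt_of_le_of_lt (T₀.mkContinuous_norm_le hC0 hT₀bound) hChalf)
        (by norm_num)
    refine ⟨ContinuousLinearEquiv.ofUnit (Units.oneSub (-T) hnT), ?_⟩
    ext x
    show ((1 - -T : H →L[ℂ] H)) x = (1 + T) x
    rw [sub_neg_eq_add]
end

section
/- Let r = (r(k))_{k∈2ℤ} ∈ ℓ²(2ℤ) with nonnegative entries, norm ‖r‖, and tail E_m(r) = (∑_{|j|≥m} r(j)²)^{1/2}. Then for every n ∈ 2ℤ with |n| ≥ 1: ∑_{i,k∈2ℤ, i≠n, k≠n} r(i+k)²/(|n−i||n−k|) ≤ 12 ( ‖r‖²/√|n| + E_{|n|}(r)² ). -/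
open scoped ENNReal


noncomputable def vE : ℕ → ℝ≥0∞ := fun k => ENNReal.ofReal ((k:ℝ) ^ (-(3/2):ℝ))

noncomputable def uE : ℤ → ℝ≥0∞ := fun a => ENNReal.ofReal (|(a:ℝ)| ^ (-(3/2):ℝ))

noncomputable def w : ℤ → ℝ≥0∞ := fun a => if a = 0 then 0 else (ENNReal.ofReal |(a:ℝ)|)⁻¹

lemma rpow_nth {x : ℝ} (hx : 0 < x) :
    x ^ (-(3/2) : ℝ) = 1 / (x * Real.sqrt x) := by
  rw [Real.rpow_neg hx.le, one_div]
  congr 1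
  rw [Real.sqrt_eq_rpow, show (3/2 : ℝ) = 1 + 1/2 by norm_num, Real.rpow_add hx, Real.rpow_one]

lemma step_bound {m : ℝ} (hm : 2 ≤ m) :
    m ^ (-(3/2) : ℝ) ≤ 2 / Real.sqrt (m - 1) - 2 / Real.sqrt m := by
  have hm0 : (0:ℝ) < m := by linarith
  set s := Real.sqrt m with hsdef
  set t := Real.sqrt (m - 1) with htdef
  have hs : s ^ 2 = m := Real.sq_sqrt hm0.le
  have ht : t ^ 2 = m - 1 := Real.sq_sqrt (by linarith)
  have hs0 : 0 < s := Real.sqrt_pos.mpr hm0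
  have ht0 : 0 < t := Real.sqrt_pos.mpr (by linarith)
  have hts : t ≤ s := Real.sqrt_le_sqrt (by linarith)
  have key : 2 / t - 2 / s = 2 / (s * t * (s + t)) := by
    rw [div_sub_div _ _ ht0.ne' hs0.ne', div_eq_div_iff (by positivity) (by positivity)]
    linear_combination 2*s*t*hs - 2*s*t*ht
  have hms : m * Real.sqrt m = s ^ 2 * s := by rw [← hsdef, ← hs]
  rw [rpow_nth hm0, key, hms, div_le_div_iff₀ (by positivity) (by positivity)]
  nlinarith [mul_pos hs0 ht0, mul_le_mul_of_nonneg_left hts hs0.le,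
    mul_le_mul_of_nonneg_left (mul_le_mul hts hts ht0.le hs0.le) hs0.le]

lemma partial_zeta : ∀ N : ℕ, ∑ m ∈ Finset.range (N+2), ((m:ℝ)) ^ (-(3/2):ℝ) ≤ 3 - 2 / Real.sqrt (N+1)
  | 0 => by
      rw [Finset.sum_range_succ, Finset.sum_range_one]
      norm_num [Real.zero_rpow, Real.one_rpow]
  | (N+1) => by
      rw [Finset.sum_range_succ]
      have h1 := partial_zeta N
      have h2 : ((N+2:ℕ):ℝ) ^ (-(3/2):ℝ) ≤ 2 / Real.sqrt ((N:ℝ)+1) - 2 / Real.sqrt ((N:ℝ)+2) := by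
        have := step_bound (m := ((N:ℝ)+2)) (by linarith [Nat.cast_nonneg (α := ℝ) N])
        push_cast
        convert this using 3
        ring
      push_cast at h1 h2 ⊢
      have h3 : ((N:ℝ)+1+1) = (N:ℝ)+2 := by ring
      rw [h3]
      linarith

lemma partial_zeta' (N : ℕ) : ∑ m ∈ Finset.range N, ((m:ℝ)) ^ (-(3/2):ℝ) ≤ 3 := by
  rcases N with _ | _ | N
  · simp
  · norm_num [Real.zero_rpow]
  · have := partial_zeta N
    have h : 0 ≤ 2 / Real.sqrt ((N:ℝ)+1) := by positivity
    linarith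

lemma natsum : ∑' k : ℕ, vE k ≤ 3 := by
  rw [ENNReal.tsum_eq_iSup_sum]
  apply iSup_le
  intro s
  obtain ⟨N, hN⟩ := s.exists_nat_subset_range
  calc ∑ k ∈ s, vE k ≤ ∑ k ∈ Finset.range N, vE k := Finset.sum_le_sum_of_subset hN
    _ = ENNReal.ofReal (∑ k ∈ Finset.range N, ((k:ℝ)) ^ (-(3/2):ℝ)) := by
        rw [ENNReal.ofReal_sum_of_nonneg]
        · rfl
        · intro i _; positivity
    _ ≤ 3 := by
        rw [show (3:ℝ≥0∞) = ENNReal.ofReal 3 by norm_num]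
        exact ENNReal.ofReal_le_ofReal (partial_zeta' N)

lemma intsum : ∑' a : ℤ, uE a ≤ 6 := by
  have huniv : {a : ℤ | 0 ≤ a} ∪ {a : ℤ | a < 0} = Set.univ := by
    ext a; simp [le_or_gt]
  have hdisj : Disjoint {a : ℤ | 0 ≤ a} {a : ℤ | a < 0} := by
    rw [Set.disjoint_left]; intro a ha hb; simp at ha hb; omega
  have h1 : ∑' x : ↥{a : ℤ | 0 ≤ a}, uE ↑x ≤ 3 := by
    have he : ∀ x : ↥{a : ℤ | 0 ≤ a}, uE ↑x = vE ((x : ℤ).toNat) := by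
      rintro ⟨a, ha⟩
      simp only [uE, vE]
      congr 2
      rw [abs_of_nonneg (by exact_mod_cast ha)]
      exact_mod_cast (Int.toNat_of_nonneg ha).symm
    calc ∑' x : ↥{a : ℤ | 0 ≤ a}, uE ↑x = ∑' x : ↥{a : ℤ | 0 ≤ a}, vE ((x : ℤ).toNat) :=
          tsum_congr he
      _ ≤ ∑' k : ℕ, vE k := ENNReal.tsum_comp_le_tsum_of_injective
          (f := fun x : ↥{a : ℤ | 0 ≤ a} => (x : ℤ).toNat)
          (by rintro ⟨a, ha⟩ ⟨b, hb⟩ h; simp at ha hb h ⊢; omega) vE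
      _ ≤ 3 := natsum
  have h2 : ∑' x : ↥{a : ℤ | a < 0}, uE ↑x ≤ 3 := by
    have he : ∀ x : ↥{a : ℤ | a < 0}, uE ↑x = vE ((-(x : ℤ)).toNat) := by
      rintro ⟨a, ha⟩
      simp only [uE, vE]
      congr 2
      simp only [Set.mem_setOf_eq] at ha
      rw [abs_of_neg (by exact_mod_cast ha)]
      have : ((-a).toNat : ℤ) = -a := Int.toNat_of_nonneg (by omega)
      exact_mod_cast this.symm
    calc ∑' x : ↥{a : ℤ | a < 0}, uE ↑x = ∑' x : ↥{a : ℤ | a < 0}, vE ((-(x : ℤ)).toNat) :=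
          tsum_congr he
      _ ≤ ∑' k : ℕ, vE k := ENNReal.tsum_comp_le_tsum_of_injective
          (f := fun x : ↥{a : ℤ | a < 0} => (-(x : ℤ)).toNat)
          (by rintro ⟨a, ha⟩ ⟨b, hb⟩ h; simp at ha hb h ⊢; omega) vE
      _ ≤ 3 := natsum
  calc ∑' a : ℤ, uE a = ∑' x : ↥(Set.univ : Set ℤ), uE ↑x := (tsum_univ uE).symm
    _ = ∑' x : ↥({a : ℤ | 0 ≤ a} ∪ {a : ℤ | a < 0}), uE ↑x := by rw [huniv]
    _ = (∑' x : ↥{a : ℤ | 0 ≤ a}, uE ↑x) + ∑' x : ↥{a : ℤ | a < 0}, uE ↑x :=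
        ENNReal.summable.tsum_union_disjoint hdisj ENNReal.summable
    _ ≤ 3 + 3 := add_le_add h1 h2
    _ = 6 := by norm_num

lemma key_half {x y m : ℝ} (hx : 1 ≤ x) (hy : 1 ≤ y) (hm : 1 ≤ m) (hxy : x ≤ y)
    (hs : m ≤ x + y) : 1 / (x * y) ≤ Real.sqrt (2/m) * x ^ (-(3/2):ℝ) := by
  have hx0 : (0:ℝ) < x := by linarith
  have hy0 : (0:ℝ) < y := by linarith
  have hm0 : (0:ℝ) < m := by linarith
  have h1 : Real.sqrt x ≤ Real.sqrt (2/m) * y := by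
    have h2 : Real.sqrt (2/m) * y = Real.sqrt ((2/m) * y^2) := by
      rw [Real.sqrt_mul (by positivity), Real.sqrt_sq hy0.le]
    rw [h2]
    apply Real.sqrt_le_sqrt
    have : m * y ≤ 2 * y^2 := by nlinarith
    rw [div_mul_eq_mul_div, le_div_iff₀ hm0]
    nlinarith
  rw [rpow_nth hx0, mul_one_div, div_le_div_iff₀ (by positivity) (by positivity)]
  calc 1 * (x * Real.sqrt x) = x * Real.sqrt x := by ring
    _ ≤ x * (Real.sqrt (2/m) * y) := by
        apply mul_le_mul_of_nonneg_left h1 hx0.le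
    _ = Real.sqrt (2/m) * (x * y) := by ring

lemma key_real {x y m : ℝ} (hx : 1 ≤ x) (hy : 1 ≤ y) (hm : 1 ≤ m)
    (hs : m ≤ x + y) :
    1 / (x * y) ≤ Real.sqrt (2/m) * (x ^ (-(3/2):ℝ) + y ^ (-(3/2):ℝ)) := by
  have hsq : 0 ≤ Real.sqrt (2/m) := Real.sqrt_nonneg _
  have hxr : (0:ℝ) ≤ x ^ (-(3/2):ℝ) := Real.rpow_nonneg (by linarith) _
  have hyr : (0:ℝ) ≤ y ^ (-(3/2):ℝ) := Real.rpow_nonneg (by linarith) _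
  rcases le_total x y with h | h
  · have := key_half hx hy hm h hs
    nlinarith
  · have := key_half hy hx hm h (by linarith)
    rw [mul_comm x y]
    nlinarith

lemma int_abs_one_le {a : ℤ} (ha : a ≠ 0) : (1:ℝ) ≤ |(a:ℝ)| := by
  have := Int.one_le_abs ha
  calc (1:ℝ) = ((1:ℤ):ℝ) := by norm_num
    _ ≤ ((|a|:ℤ):ℝ) := by exact_mod_cast this
    _ = |(a:ℝ)| := by push_cast; ring

lemma w_eq {a : ℤ} (ha : a ≠ 0) : w a = ENNReal.ofReal (|(a:ℝ)|⁻¹) := by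
  rw [w, if_neg ha, ENNReal.ofReal_inv_of_pos (by linarith [int_abs_one_le ha])]

lemma term_bound {c : ℤ} (hc : c ≠ 0) (a : ℤ) :
    w a * w (c - a) ≤ ENNReal.ofReal (Real.sqrt (2/|(c:ℝ)|)) * (uE a + uE (c - a)) := by
  rcases eq_or_ne a 0 with rfl | ha
  · simp [w]
  rcases eq_or_ne (c - a) 0 with h | hca
  · simp [w, h]
  have hx := int_abs_one_le ha
  have hy := int_abs_one_le hca
  have hm := int_abs_one_le hc
  rw [w_eq ha, w_eq hca, ← ENNReal.ofReal_mul (by positivity)]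
  have hadd : uE a + uE (c-a) =
      ENNReal.ofReal (|(a:ℝ)| ^ (-(3/2):ℝ) + |((c-a : ℤ):ℝ)| ^ (-(3/2):ℝ)) := by
    rw [uE, uE, ENNReal.ofReal_add (by positivity) (by positivity)]
  rw [hadd, ← ENNReal.ofReal_mul (by positivity)]
  apply ENNReal.ofReal_le_ofReal
  rw [show |(a:ℝ)|⁻¹ * |((c-a:ℤ):ℝ)|⁻¹ = 1 / (|(a:ℝ)| * |((c-a:ℤ):ℝ)|) by
    rw [one_div, mul_inv]]
  have htri : |(c:ℝ)| ≤ |(a:ℝ)| + |((c-a:ℤ):ℝ)| := by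
    push_cast
    calc |(c:ℝ)| = |(a:ℝ) + ((c:ℝ) - a)| := by ring_nf
      _ ≤ |(a:ℝ)| + |(c:ℝ) - a| := abs_add_le _ _
  exact key_real hx hy hm htri

lemma F_shift (c : ℤ) : ∑' a : ℤ, uE (c - a) = ∑' a : ℤ, uE a :=
  (Equiv.subLeft c).tsum_eq uE

lemma F_main {c : ℤ} (hc : c ≠ 0) :
    ∑' a : ℤ, w a * w (c - a) ≤ ENNReal.ofReal (Real.sqrt (2/|(c:ℝ)|)) * 12 := by
  calc ∑' a : ℤ, w a * w (c - a)
      ≤ ∑' a : ℤ, ENNReal.ofReal (Real.sqrt (2/|(c:ℝ)|)) * (uE a + uE (c - a)) :=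
        ENNReal.summable.tsum_le_tsum (term_bound hc) ENNReal.summable
    _ = ENNReal.ofReal (Real.sqrt (2/|(c:ℝ)|)) * ((∑' a : ℤ, uE a) + ∑' a : ℤ, uE (c - a)) := by
        rw [ENNReal.tsum_mul_left, ENNReal.tsum_add]
    _ ≤ ENNReal.ofReal (Real.sqrt (2/|(c:ℝ)|)) * (6 + 6) := by
        apply mul_le_mul_right
        rw [F_shift]
        exact add_le_add intsum intsum
    _ = ENNReal.ofReal (Real.sqrt (2/|(c:ℝ)|)) * 12 := by norm_num

lemma F_all (c : ℤ) : ∑' a : ℤ, w a * w (c - a) ≤ 24 := by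
  rcases eq_or_ne c 0 with rfl | hc
  · calc ∑' a : ℤ, w a * w (0 - a) ≤ ∑' a : ℤ, uE a := by
          apply ENNReal.summable.tsum_le_tsum _ ENNReal.summable
          intro a
          rcases eq_or_ne a 0 with rfl | ha
          · simp [w]
          have hx := int_abs_one_le ha
          have hza : (0:ℤ) - a ≠ 0 := by omega
          rw [w_eq ha, w_eq hza, ← ENNReal.ofReal_mul (by positivity), uE]
          apply ENNReal.ofReal_le_ofReal
          have habs : |((0 - a : ℤ):ℝ)| = |(a:ℝ)| := by push_cast; rw [zero_sub, abs_neg]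
          rw [habs]
          calc |(a:ℝ)|⁻¹ * |(a:ℝ)|⁻¹ = |(a:ℝ)| ^ ((-2 : ℤ):ℝ) := by
                rw [show ((-2:ℤ):ℝ) = -((2:ℕ):ℝ) by norm_num, Real.rpow_neg (by positivity),
                  Real.rpow_natCast]
                ring
            _ ≤ |(a:ℝ)| ^ (-(3/2):ℝ) :=
                Real.rpow_le_rpow_of_exponent_le hx (by norm_num)
      _ ≤ 6 := intsum
      _ ≤ 24 := by norm_num
  · calc ∑' a : ℤ, w a * w (c - a) ≤ ENNReal.ofReal (Real.sqrt (2/|(c:ℝ)|)) * 12 := F_main hc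
      _ ≤ ENNReal.ofReal 2 * 12 := by
          apply mul_le_mul_left
          apply ENNReal.ofReal_le_ofReal
          calc Real.sqrt (2/|(c:ℝ)|) ≤ Real.sqrt 2 := by
                apply Real.sqrt_le_sqrt
                rw [div_le_iff₀ (by linarith [int_abs_one_le hc])]
                nlinarith [int_abs_one_le hc]
            _ ≤ 2 := by
                nlinarith [Real.sq_sqrt (by norm_num : (0:ℝ) ≤ 2), Real.sqrt_nonneg 2]
      _ = 24 := by rw [show ENNReal.ofReal 2 = 2 from ENNReal.ofReal_ofNat 2]; norm_num

lemma reindex (g w : ℤ → ℝ≥0∞) (hw : w 0 = 0) (n : ℤ) (hn : Even n) :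
    ∑' p : {p : ℤ × ℤ // Even p.1 ∧ Even p.2 ∧ p.1 ≠ n ∧ p.2 ≠ n},
      g ((p : ℤ × ℤ).1 + (p : ℤ × ℤ).2) * (w (n - (p : ℤ × ℤ).1) * w (n - (p : ℤ × ℤ).2))
    = ∑' q : ℤ × ℤ, g (2*n - 2*q.1 - 2*q.2) * (w (2*q.1) * w (2*q.2)) := by
  have hsupp : ∀ q : ℤ × ℤ,
      (g (2*n - 2*q.1 - 2*q.2) * (w (2*q.1) * w (2*q.2)) ≠ 0) → q.1 ≠ 0 ∧ q.2 ≠ 0 := by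
    intro q hq
    constructor
    · rintro h; apply hq; rw [show 2*q.1 = 0 by omega, hw]; simp
    · rintro h; apply hq; rw [show 2*q.2 = 0 by omega, hw]; simp
  apply tsum_eq_tsum_of_ne_zero_bij
    (i := fun q => ⟨(n - 2*(q:ℤ×ℤ).1, n - 2*(q:ℤ×ℤ).2),
      ⟨hn.sub (even_two_mul _), hn.sub (even_two_mul _),
        by have := (hsupp _ q.2).1; omega, by have := (hsupp _ q.2).2; omega⟩⟩)
  · rintro q q' h
    simp only [Subtype.mk.injEq, Prod.mk.injEq] at h
    exact Subtype.ext (Prod.ext_iff.mpr ⟨by omega, by omega⟩)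
  · rintro ⟨⟨i0, k0⟩, he1, he2, hi0, hk0⟩ hp
    simp only [Function.mem_support] at hp
    obtain ⟨a, ha⟩ := hn.sub he1
    obtain ⟨b, hb⟩ := hn.sub he2
    have h2a : 2*a = n - i0 := by omega
    have h2b : 2*b = n - k0 := by omega
    have hH : g (2*n - 2*a - 2*b) * (w (2*a) * w (2*b))
        = g (i0 + k0) * (w (n - i0) * w (n - k0)) := by
      rw [h2a, h2b, show 2*n - (n - i0) - (n - k0) = i0 + k0 by ring]
    refine ⟨⟨(a, b), ?_⟩, ?_⟩
    · simp only [Function.mem_support]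
      rw [hH]
      exact hp
    · simp only [Subtype.mk.injEq, Prod.mk.injEq]
      constructor <;> omega
  · rintro ⟨⟨a, b⟩, hq⟩
    simp only
    rw [show n - (n - 2*a) = 2*a by ring, show n - (n - 2*b) = 2*b by ring,
      show (n - 2*a) + (n - 2*b) = 2*n - 2*a - 2*b by ring]

lemma w_two (a : ℤ) : w (2*a) = 2⁻¹ * w a := by
  rcases eq_or_ne a 0 with rfl | ha
  · norm_num [w]
  · have h2a : 2*a ≠ 0 := by omega
    rw [w, w]
    simp only [if_neg ha, if_neg h2a]
    have habs : |((2*a:ℤ):ℝ)| = 2 * |(a:ℝ)| := by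
      push_cast; rw [abs_mul]; norm_num
    rw [habs, ENNReal.ofReal_mul (by norm_num), ENNReal.mul_inv (by simp) (by simp),
      show ENNReal.ofReal 2 = 2 from ENNReal.ofReal_ofNat 2]

lemma core (g : ℤ → ℝ≥0∞) (n : ℤ) (hn : Even n) (hn1 : 1 ≤ |n|) :
    ∑' q : ℤ × ℤ, g (2*n - 2*q.1 - 2*q.2) * (w (2*q.1) * w (2*q.2)) ≤
      ENNReal.ofReal (6 / Real.sqrt |(n:ℝ)|) * (∑' k : {k : ℤ // Even k}, g ↑k)
        + 6 * ∑' j : {j : ℤ // Even j ∧ |n| ≤ |j|}, g ↑j := by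
  have h14 : ((4:ℝ≥0∞))⁻¹ = ENNReal.ofReal (1/4) := by
    rw [ENNReal.ofReal_div_of_pos (by norm_num)]
    norm_num [ENNReal.ofReal_ofNat]
  -- step A : rewrite as 4⁻¹ * ∑'_c g(2n-2c) * F c
  have stepA : ∑' q : ℤ × ℤ, g (2*n - 2*q.1 - 2*q.2) * (w (2*q.1) * w (2*q.2))
      = ∑' c : ℤ, 4⁻¹ * (g (2*n - 2*c) * ∑' a : ℤ, w a * w (c - a)) := by
    calc ∑' q : ℤ × ℤ, g (2*n - 2*q.1 - 2*q.2) * (w (2*q.1) * w (2*q.2))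
        = ∑' q : ℤ × ℤ, 4⁻¹ * (g (2*n - 2*q.1 - 2*q.2) * (w q.1 * w q.2)) := by
          apply tsum_congr; intro q
          rw [w_two, w_two]
          have h4 : (2⁻¹ : ℝ≥0∞) * 2⁻¹ = 4⁻¹ := by
            rw [← ENNReal.mul_inv (by simp) (by simp)]; norm_num
          calc g (2*n - 2*q.1 - 2*q.2) * (2⁻¹ * w q.1 * (2⁻¹ * w q.2))
              = (2⁻¹ * 2⁻¹) * (g (2*n - 2*q.1 - 2*q.2) * (w q.1 * w q.2)) := by ring
            _ = 4⁻¹ * (g (2*n - 2*q.1 - 2*q.2) * (w q.1 * w q.2)) := by rw [h4]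
      _ = ∑' a : ℤ, ∑' b : ℤ, 4⁻¹ * (g (2*n - 2*a - 2*b) * (w a * w b)) :=
          ENNReal.tsum_prod (f := fun a b => 4⁻¹ * (g (2*n - 2*a - 2*b) * (w a * w b)))
      _ = ∑' a : ℤ, ∑' c : ℤ, 4⁻¹ * (g (2*n - 2*c) * (w a * w (c - a))) := by
          apply tsum_congr; intro a
          have := (Equiv.addLeft a).tsum_eq
            (fun c => 4⁻¹ * (g (2*n - 2*c) * (w a * w (c - a))))
          rw [← this]
          apply tsum_congr; intro b
          simp only [Equiv.coe_addLeft]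
          rw [add_sub_cancel_left, show 2*n - 2*(a+b) = 2*n - 2*a - 2*b by ring]
      _ = ∑' c : ℤ, ∑' a : ℤ, 4⁻¹ * (g (2*n - 2*c) * (w a * w (c - a))) := ENNReal.tsum_comm
      _ = ∑' c : ℤ, 4⁻¹ * (g (2*n - 2*c) * ∑' a : ℤ, w a * w (c - a)) := by
          apply tsum_congr; intro c
          rw [← ENNReal.tsum_mul_left, ← ENNReal.tsum_mul_left]
  rw [stepA]
  -- pointwise split
  have hsplit : ∀ c : ℤ, 4⁻¹ * (g (2*n - 2*c) * ∑' a : ℤ, w a * w (c - a)) ≤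
      (if |2*n - 2*c| < |n| then g (2*n - 2*c) * ENNReal.ofReal (6 / Real.sqrt |(n:ℝ)|) else 0)
      + (if |2*n - 2*c| < |n| then 0 else g (2*n - 2*c) * 6) := by
    intro c
    by_cases hcond : |2*n - 2*c| < |n|
    · rw [if_pos hcond, if_pos hcond, add_zero]
      -- derive |n| < 2*|c| in ℤ
      have habs2 : |2*n - 2*c| = 2 * |n - c| := by
        rw [show 2*n - 2*c = 2*(n-c) by ring, abs_mul]; norm_num
      have htri : |n| ≤ |n - c| + |c| := by
        calc |n| = |(n - c) + c| := by ring_nf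
          _ ≤ |n - c| + |c| := abs_add_le _ _
      have hc2 : |n| < 2 * |c| := by omega
      have hc0 : c ≠ 0 := by
        intro h; rw [h] at hc2; simp at hc2; omega
      -- real versions
      have hnr : (1:ℝ) ≤ |(n:ℝ)| := by
        have : ((1:ℤ):ℝ) ≤ ((|n|:ℤ):ℝ) := by exact_mod_cast hn1
        push_cast at this; linarith
      have hcr : |(n:ℝ)| < 2 * |(c:ℝ)| := by
        have : ((|n|:ℤ):ℝ) < ((2 * |c| : ℤ):ℝ) := by exact_mod_cast hc2
        push_cast at this; linarith
      have hcpos : (0:ℝ) < |(c:ℝ)| := by linarith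
      have hnpos : (0:ℝ) < |(n:ℝ)| := by linarith
      have hsqrt : Real.sqrt (2/|(c:ℝ)|) ≤ 2 / Real.sqrt |(n:ℝ)| := by
        have h4 : Real.sqrt (4/|(n:ℝ)|) = 2 / Real.sqrt |(n:ℝ)| := by
          rw [show (4:ℝ)/|(n:ℝ)| = 2^2 / |(n:ℝ)| by norm_num,
            Real.sqrt_div (by norm_num : (0:ℝ) ≤ 2^2), Real.sqrt_sq (by norm_num : (0:ℝ) ≤ 2)]
        rw [← h4]
        apply Real.sqrt_le_sqrt
        rw [div_le_div_iff₀ hcpos hnpos]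
        linarith
      have hconst : 4⁻¹ * (ENNReal.ofReal (Real.sqrt (2/|(c:ℝ)|)) * 12)
          ≤ ENNReal.ofReal (6 / Real.sqrt |(n:ℝ)|) := by
        have h12 : (12:ℝ≥0∞) = ENNReal.ofReal 12 := (ENNReal.ofReal_ofNat 12).symm
        rw [h14, h12, ← ENNReal.ofReal_mul (by positivity), ← ENNReal.ofReal_mul (by norm_num)]
        apply ENNReal.ofReal_le_ofReal
        have h3 : (3:ℝ) * Real.sqrt (2/|(c:ℝ)|) ≤ 3 * (2 / Real.sqrt |(n:ℝ)|) := by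
          linarith
        calc (1/4) * (Real.sqrt (2/|(c:ℝ)|) * 12) = 3 * Real.sqrt (2/|(c:ℝ)|) := by ring
          _ ≤ 3 * (2 / Real.sqrt |(n:ℝ)|) := h3
          _ = 6 / Real.sqrt |(n:ℝ)| := by ring
      calc 4⁻¹ * (g (2*n - 2*c) * ∑' a : ℤ, w a * w (c - a))
          ≤ 4⁻¹ * (g (2*n - 2*c) * (ENNReal.ofReal (Real.sqrt (2/|(c:ℝ)|)) * 12)) := by
            apply mul_le_mul_right
            exact mul_le_mul_right (F_main hc0) _
        _ = g (2*n - 2*c) * (4⁻¹ * (ENNReal.ofReal (Real.sqrt (2/|(c:ℝ)|)) * 12)) := by ring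
        _ ≤ g (2*n - 2*c) * ENNReal.ofReal (6 / Real.sqrt |(n:ℝ)|) :=
            mul_le_mul_right hconst _
    · rw [if_neg hcond, if_neg hcond, zero_add]
      calc 4⁻¹ * (g (2*n - 2*c) * ∑' a : ℤ, w a * w (c - a))
          ≤ 4⁻¹ * (g (2*n - 2*c) * 24) := by
            apply mul_le_mul_right
            exact mul_le_mul_right (F_all c) _
        _ = g (2*n - 2*c) * 6 := by
            rw [show (24:ℝ≥0∞) = 4 * 6 by norm_num]
            calc 4⁻¹ * (g (2*n - 2*c) * (4 * 6)) = (4⁻¹ * 4) * (g (2*n - 2*c) * 6) := by ring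
              _ = g (2*n - 2*c) * 6 := by
                  rw [ENNReal.inv_mul_cancel (by norm_num) (by norm_num), one_mul]
  have hA : ∑' c : ℤ,
      (if |2*n - 2*c| < |n| then g (2*n - 2*c) * ENNReal.ofReal (6 / Real.sqrt |(n:ℝ)|) else 0)
      ≤ ENNReal.ofReal (6 / Real.sqrt |(n:ℝ)|) * ∑' k : {k : ℤ // Even k}, g ↑k := by
    have hφ : Function.Injective
        (fun c : ℤ => (⟨2*n - 2*c, (even_two_mul n).sub (even_two_mul c)⟩ : {k : ℤ // Even k})) := by
      intro a b h
      simp only [Subtype.mk.injEq] at h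
      omega
    calc ∑' c : ℤ,
        (if |2*n - 2*c| < |n| then g (2*n - 2*c) * ENNReal.ofReal (6 / Real.sqrt |(n:ℝ)|) else 0)
        ≤ ∑' c : ℤ, g (2*n - 2*c) * ENNReal.ofReal (6 / Real.sqrt |(n:ℝ)|) := by
          apply ENNReal.summable.tsum_le_tsum _ ENNReal.summable
          intro c
          split
          · exact le_rfl
          · exact zero_le
      _ = (∑' c : ℤ, g (2*n - 2*c)) * ENNReal.ofReal (6 / Real.sqrt |(n:ℝ)|) :=
          ENNReal.tsum_mul_right
      _ ≤ (∑' k : {k : ℤ // Even k}, g ↑k) * ENNReal.ofReal (6 / Real.sqrt |(n:ℝ)|) := by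
          apply mul_le_mul_left
          exact ENNReal.tsum_comp_le_tsum_of_injective hφ (fun k => g ↑k)
      _ = ENNReal.ofReal (6 / Real.sqrt |(n:ℝ)|) * ∑' k : {k : ℤ // Even k}, g ↑k := mul_comm _ _
  have hB : ∑' c : ℤ, (if |2*n - 2*c| < |n| then 0 else g (2*n - 2*c) * 6)
      ≤ 6 * ∑' j : {j : ℤ // Even j ∧ |n| ≤ |j|}, g ↑j := by
    set T : Set ℤ := {c : ℤ | |n| ≤ |2*n - 2*c|} with hT
    have hτ : ∑' c : ℤ, (if |2*n - 2*c| < |n| then 0 else g (2*n - 2*c) * 6)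
        = (∑' c : ℤ, (if |2*n - 2*c| < |n| then 0 else g (2*n - 2*c))) * 6 := by
      rw [← ENNReal.tsum_mul_right]
      apply tsum_congr; intro c
      split
      · rw [zero_mul]
      · rfl
    rw [hτ]
    have hsub : Function.support (fun c : ℤ => (if |2*n - 2*c| < |n| then 0 else g (2*n - 2*c))) ⊆ T := by
      intro c hc
      simp only [Function.mem_support] at hc
      rw [hT, Set.mem_setOf_eq]
      by_contra h
      rw [if_pos (by omega)] at hc
      exact hc rfl
    have hψ : Function.Injective (fun x : ↥T =>
        (⟨2*n - 2*(x:ℤ), ⟨(even_two_mul n).sub (even_two_mul _), x.2⟩⟩ :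
          {j : ℤ // Even j ∧ |n| ≤ |j|})) := by
      rintro ⟨a, ha⟩ ⟨b, hb⟩ h
      simp only [Subtype.mk.injEq] at h
      have h' : 2*n - 2*a = 2*n - 2*b := h
      exact Subtype.ext (show a = b by omega)
    calc (∑' c : ℤ, (if |2*n - 2*c| < |n| then 0 else g (2*n - 2*c))) * 6
        = (∑' x : ↥T, (if |2*n - 2*(x:ℤ)| < |n| then 0 else g (2*n - 2*(x:ℤ)))) * 6 := by
          rw [tsum_subtype_eq_of_support_subset hsub]
      _ = (∑' x : ↥T, g (2*n - 2*(x:ℤ))) * 6 := by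
          congr 1
          apply tsum_congr
          intro x
          rw [if_neg (not_lt.mpr x.2)]
      _ ≤ (∑' j : {j : ℤ // Even j ∧ |n| ≤ |j|}, g ↑j) * 6 := by
          apply mul_le_mul_left
          exact ENNReal.tsum_comp_le_tsum_of_injective hψ (fun j => g ↑j)
      _ = 6 * ∑' j : {j : ℤ // Even j ∧ |n| ≤ |j|}, g ↑j := mul_comm _ _
  calc ∑' c : ℤ, 4⁻¹ * (g (2*n - 2*c) * ∑' a : ℤ, w a * w (c - a))
      ≤ ∑' c : ℤ,
        ((if |2*n - 2*c| < |n| then g (2*n - 2*c) * ENNReal.ofReal (6 / Real.sqrt |(n:ℝ)|) else 0)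
        + (if |2*n - 2*c| < |n| then 0 else g (2*n - 2*c) * 6)) :=
        ENNReal.summable.tsum_le_tsum hsplit ENNReal.summable
    _ = (∑' c : ℤ,
        (if |2*n - 2*c| < |n| then g (2*n - 2*c) * ENNReal.ofReal (6 / Real.sqrt |(n:ℝ)|) else 0))
        + ∑' c : ℤ, (if |2*n - 2*c| < |n| then 0 else g (2*n - 2*c) * 6) := ENNReal.tsum_add
    _ ≤ _ := add_le_add hA hB

set_option maxHeartbeats 1000000 in
/-- inequality (t2) of the paper: for `r ∈ ℓ²(2ℤ)` with nonnegative
entries and `n ∈ 2ℤ`, `|n| ≥ 1`: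
`∑_{i,k∈2ℤ, i≠n, k≠n} r(i+k)²/(|n−i||n−k|) ≤ 12(‖r‖²/√|n| + E_{|n|}(r)²)`. -/
theorem ell2_weighted_tail_estimate_double
    (r : ℤ → ℝ) (hpos : ∀ k, 0 ≤ r k)
    (hsum : Summable fun k : {k : ℤ // Even k} => r k ^ 2)
    (n : ℤ) (hn : Even n) (hn1 : 1 ≤ |n|) :
    ∑' p : {p : ℤ × ℤ // Even p.1 ∧ Even p.2 ∧ p.1 ≠ n ∧ p.2 ≠ n},
        r ((p : ℤ × ℤ).1 + (p : ℤ × ℤ).2) ^ 2 /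
          (((|n - (p : ℤ × ℤ).1| : ℤ) : ℝ) * ((|n - (p : ℤ × ℤ).2| : ℤ) : ℝ)) ≤
      12 * ((∑' k : {k : ℤ // Even k}, r k ^ 2) / Real.sqrt ((|n| : ℤ) : ℝ) +
        ∑' j : {j : ℤ // Even j ∧ |n| ≤ |j|}, r j ^ 2) := by
  set g : ℤ → ℝ≥0∞ := fun s => ENNReal.ofReal (r s ^ 2) with hg
  set S : ℝ := ∑' k : {k : ℤ // Even k}, r k ^ 2 with hSdef
  set Esq : ℝ := ∑' j : {j : ℤ // Even j ∧ |n| ≤ |j|}, r j ^ 2 with hEdef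
  have hS : 0 ≤ S := tsum_nonneg fun _ => sq_nonneg _
  have hEsq : 0 ≤ Esq := tsum_nonneg fun _ => sq_nonneg _
  have hcast : ((|n| : ℤ) : ℝ) = |(n:ℝ)| := by push_cast; ring
  have hRHS : 0 ≤ 12 * (S / Real.sqrt ((|n| : ℤ) : ℝ) + Esq) := by
    have h1 : 0 ≤ S / Real.sqrt ((|n| : ℤ) : ℝ) := div_nonneg hS (Real.sqrt_nonneg _)
    linarith
  by_cases hf : Summable (fun p : {p : ℤ × ℤ // Even p.1 ∧ Even p.2 ∧ p.1 ≠ n ∧ p.2 ≠ n} =>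
      r ((p : ℤ × ℤ).1 + (p : ℤ × ℤ).2) ^ 2 /
        (((|n - (p : ℤ × ℤ).1| : ℤ) : ℝ) * ((|n - (p : ℤ × ℤ).2| : ℤ) : ℝ)))
  · have hnn : ∀ p : {p : ℤ × ℤ // Even p.1 ∧ Even p.2 ∧ p.1 ≠ n ∧ p.2 ≠ n},
        0 ≤ r ((p : ℤ × ℤ).1 + (p : ℤ × ℤ).2) ^ 2 /
          (((|n - (p : ℤ × ℤ).1| : ℤ) : ℝ) * ((|n - (p : ℤ × ℤ).2| : ℤ) : ℝ)) := by
      intro p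
      apply div_nonneg (sq_nonneg _)
      have h1 : (0:ℝ) ≤ ((|n - (p : ℤ × ℤ).1| : ℤ) : ℝ) := by exact_mod_cast abs_nonneg _
      have h2 : (0:ℝ) ≤ ((|n - (p : ℤ × ℤ).2| : ℤ) : ℝ) := by exact_mod_cast abs_nonneg _
      exact mul_nonneg h1 h2
    have hterm : ∀ p : {p : ℤ × ℤ // Even p.1 ∧ Even p.2 ∧ p.1 ≠ n ∧ p.2 ≠ n},
        ENNReal.ofReal (r ((p : ℤ × ℤ).1 + (p : ℤ × ℤ).2) ^ 2 /
          (((|n - (p : ℤ × ℤ).1| : ℤ) : ℝ) * ((|n - (p : ℤ × ℤ).2| : ℤ) : ℝ)))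
        = g ((p : ℤ × ℤ).1 + (p : ℤ × ℤ).2) * (w (n - (p : ℤ × ℤ).1) * w (n - (p : ℤ × ℤ).2)) := by
      rintro ⟨⟨i, k⟩, he1, he2, hi, hk⟩
      show ENNReal.ofReal (r (i + k) ^ 2 / (((|n - i| : ℤ) : ℝ) * ((|n - k| : ℤ) : ℝ)))
        = g (i + k) * (w (n - i) * w (n - k))
      have hi' : n - i ≠ 0 := by omega
      have hk' : n - k ≠ 0 := by omega
      have hAi : ((|n - i| : ℤ) : ℝ) = |((n - i : ℤ) : ℝ)| := by push_cast; ring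
      have hAk : ((|n - k| : ℤ) : ℝ) = |((n - k : ℤ) : ℝ)| := by push_cast; ring
      have hpi : (0:ℝ) < |((n - i : ℤ) : ℝ)| := by linarith [int_abs_one_le hi']
      have hpk : (0:ℝ) < |((n - k : ℤ) : ℝ)| := by linarith [int_abs_one_le hk']
      rw [hAi, hAk, ENNReal.ofReal_div_of_pos (mul_pos hpi hpk),
        ENNReal.ofReal_mul (abs_nonneg _), div_eq_mul_inv,
        ENNReal.mul_inv (Or.inl (ENNReal.ofReal_pos.mpr hpi).ne') (Or.inl ENNReal.ofReal_ne_top)]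
      rw [hg]
      simp only [w, if_neg hi', if_neg hk']
    have hsum' : Summable (fun j : {j : ℤ // Even j ∧ |n| ≤ |j|} => r j ^ 2) := by
      have hinj : Function.Injective (fun j : {j : ℤ // Even j ∧ |n| ≤ |j|} =>
          (⟨↑j, j.2.1⟩ : {k : ℤ // Even k})) := by
        rintro ⟨a, ha⟩ ⟨b, hb⟩ h
        simp only [Subtype.mk.injEq] at h
        exact Subtype.ext h
      have h2 := hsum.comp_injective hinj
      exact h2
    have hSE : (∑' k : {k : ℤ // Even k}, g ↑k) = ENNReal.ofReal S :=
      (ENNReal.ofReal_tsum_of_nonneg (fun _ => sq_nonneg _) hsum).symm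
    have hEE : (∑' j : {j : ℤ // Even j ∧ |n| ≤ |j|}, g ↑j) = ENNReal.ofReal Esq :=
      (ENNReal.ofReal_tsum_of_nonneg (fun _ => sq_nonneg _) hsum').symm
    have hfinal : ENNReal.ofReal (6 / Real.sqrt |(n:ℝ)|) * (∑' k : {k : ℤ // Even k}, g ↑k)
        + 6 * (∑' j : {j : ℤ // Even j ∧ |n| ≤ |j|}, g ↑j)
        ≤ ENNReal.ofReal (12 * (S / Real.sqrt ((|n| : ℤ) : ℝ) + Esq)) := by
      rw [hSE, hEE, ← ENNReal.ofReal_mul (by positivity),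
        show (6:ℝ≥0∞) = ENNReal.ofReal 6 from (ENNReal.ofReal_ofNat 6).symm,
        ← ENNReal.ofReal_mul (by norm_num), ← ENNReal.ofReal_add (by positivity) (by positivity)]
      apply ENNReal.ofReal_le_ofReal
      rw [hcast]
      have h1 : 0 ≤ S / Real.sqrt |(n:ℝ)| := div_nonneg hS (Real.sqrt_nonneg _)
      have h2 : 6 / Real.sqrt |(n:ℝ)| * S = 6 * (S / Real.sqrt |(n:ℝ)|) := by ring
      linarith
    have key : ENNReal.ofReal (∑' p : {p : ℤ × ℤ // Even p.1 ∧ Even p.2 ∧ p.1 ≠ n ∧ p.2 ≠ n},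
        r ((p : ℤ × ℤ).1 + (p : ℤ × ℤ).2) ^ 2 /
          (((|n - (p : ℤ × ℤ).1| : ℤ) : ℝ) * ((|n - (p : ℤ × ℤ).2| : ℤ) : ℝ)))
        ≤ ENNReal.ofReal (12 * (S / Real.sqrt ((|n| : ℤ) : ℝ) + Esq)) := by
      calc ENNReal.ofReal (∑' p : {p : ℤ × ℤ // Even p.1 ∧ Even p.2 ∧ p.1 ≠ n ∧ p.2 ≠ n},
          r ((p : ℤ × ℤ).1 + (p : ℤ × ℤ).2) ^ 2 /
            (((|n - (p : ℤ × ℤ).1| : ℤ) : ℝ) * ((|n - (p : ℤ × ℤ).2| : ℤ) : ℝ)))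
          = ∑' p : {p : ℤ × ℤ // Even p.1 ∧ Even p.2 ∧ p.1 ≠ n ∧ p.2 ≠ n},
            ENNReal.ofReal (r ((p : ℤ × ℤ).1 + (p : ℤ × ℤ).2) ^ 2 /
              (((|n - (p : ℤ × ℤ).1| : ℤ) : ℝ) * ((|n - (p : ℤ × ℤ).2| : ℤ) : ℝ))) :=
            ENNReal.ofReal_tsum_of_nonneg hnn hf
        _ = ∑' p : {p : ℤ × ℤ // Even p.1 ∧ Even p.2 ∧ p.1 ≠ n ∧ p.2 ≠ n},
            g ((p : ℤ × ℤ).1 + (p : ℤ × ℤ).2) * (w (n - (p : ℤ × ℤ).1) * w (n - (p : ℤ × ℤ).2)) :=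
            tsum_congr hterm
        _ = ∑' q : ℤ × ℤ, g (2*n - 2*q.1 - 2*q.2) * (w (2*q.1) * w (2*q.2)) :=
            reindex g w (by simp [w]) n hn
        _ ≤ _ := core g n hn hn1
        _ ≤ _ := hfinal
    exact (ENNReal.ofReal_le_ofReal_iff hRHS).mp key
  · rw [tsum_eq_zero_of_not_summable hf]
    exact hRHS
end
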